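/- Let f : ℝⁿ → ℝ be three times continuously differentiable, μ-strongly convex, with L-Lipschitz gradient, and M-self-concordant. For x, d ∈ ℝⁿ with d ≠ 0, define tˡ := (1/(M‖d‖ₓ))(‖d‖ₓ/(√μ‖d‖) − 1) and tᵘ := (1/(M‖d‖ₓ))(1 − ‖d‖ₓ/(√L‖d‖)). Then for all t ≥ 0: (i) ∇f(x+td)ᵀd ≥ ∇f(x)ᵀd + t‖d‖ₓ²/(1+Mt‖d‖ₓ) if 0 ≤ t ≤ tˡ, and ∇f(x+td)ᵀd ≥ ∇f(x)ᵀd + tˡ‖d‖ₓ²/(1+Mtˡ‖d‖ₓ) + μ(t−tˡ)‖d‖² if t > tˡ; (ii) ∇f(x+td)ᵀd ≤ ∇f(x)ᵀd + t‖d‖ₓ²/(1−Mt‖d‖ₓ) if 0 ≤ t ≤ tᵘ, and ∇f(x+td)ᵀd ≤ ∇f(x)ᵀd + tᵘ‖d‖ₓ²/(1−Mtᵘ‖d‖ₓ) + L(t−tᵘ)‖d‖² if t > tᵘ; (iii) f(x+td) ≤ f(x) + t∇f(x)ᵀd + ω*(Mt‖d‖ₓ)/M² if 0 ≤ t ≤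 tᵘ, and f(x+td) ≤ f(x) + t∇f(x)ᵀd + ω*(Mtᵘ‖d‖ₓ)/M² + tᵘ(t−tᵘ)‖d‖ₓ²/(1−Mtᵘ‖d‖ₓ) + (L/2)(t−tᵘ)²‖d‖² if t > tᵘ. -/

import Mathlib

noncomputable section

open scoped BigOperators Classical

/-- Vectors in `ℝⁿ` with the Euclidean norm. -/
abbrev V (n : ℕ) := EuclideanSpace ℝ (Fin n)

/-- The Euclidean dot product `uᵀv`. -/
def dot {n : ℕ} (u v : V n) : ℝ := ∑ i, u i * v i

/-- The Hessian quadratic form `dᵀ∇²f(x)d`. -/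
def hessQ {n : ℕ} (f : V n → ℝ) (x d : V n) : ℝ := iteratedFDeriv ℝ 2 f x ![d, d]

/-- The weighted norm `‖d‖ₓ = (dᵀ∇²f(x)d)^{1/2}`. -/
def wnorm {n : ℕ} (f : V n → ℝ) (x d : V n) : ℝ := Real.sqrt (hessQ f x d)

/-- `f` is `μ`-strongly convex. -/
def StrongConvex {n : ℕ} (μ : ℝ) (f : V n → ℝ) : Prop :=
  ∀ x y : V n, ∀ l : ℝ, 0 ≤ l → l ≤ 1 →
    f (l • x + (1 - l) • y) ≤ l * f x + (1 - l) * f y - l * (1 - l) * μ / 2 * ‖x - y‖ ^ 2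

/-- `f` has `L`-Lipschitz continuous gradient. -/
def LipschitzGrad {n : ℕ} (L : ℝ) (f : V n → ℝ) : Prop :=
  ∀ x y : V n, ‖gradient f x - gradient f y‖ ≤ L * ‖x - y‖

/-- `f` is `M`-self-concordant: `|D³f(x)[d,d,d]| ≤ 2M (dᵀ∇²f(x)d)^{3/2}`. -/
def SelfConcordant {n : ℕ} (M : ℝ) (f : V n → ℝ) : Prop :=
  ∀ x d : V n, |iteratedFDeriv ℝ 3 f x ![d, d, d]| ≤ 2 * M * hessQ f x d ^ ((3 : ℝ) / 2)

/-- `f` has `L₂`-Lipschitz continuous Hessian. -/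
def LipschitzHessian {n : ℕ} (L₂ : ℝ) (f : V n → ℝ) : Prop :=
  ∀ x y : V n, ‖iteratedFDeriv ℝ 2 f x - iteratedFDeriv ℝ 2 f y‖ ≤ L₂ * ‖x - y‖

/-- `ω(z) = z - ln(1+z)`. -/
def omegaFn (z : ℝ) : ℝ := z - Real.log (1 + z)

/-- `ω⋆(z) = -z - ln(1-z)`. -/
def omegaStar (z : ℝ) : ℝ := -z - Real.log (1 - z)

/-- Matrix–vector multiplication acting on Euclidean space. -/
def mulv {n : ℕ} (A : Matrix (Fin n) (Fin n) ℝ) (v : V n) : V n :=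
  (EuclideanSpace.equiv (Fin n) ℝ).symm (A.mulVec (EuclideanSpace.equiv (Fin n) ℝ v))

/-- `g_k = ∇f(x_k)`. -/
def gvec {n : ℕ} (f : V n → ℝ) (x : ℕ → V n) (k : ℕ) : V n := gradient f (x k)

/-- `d_k = -B_k⁻¹ g_k`. -/
def dvec {n : ℕ} (f : V n → ℝ) (x : ℕ → V n) (B : ℕ → Matrix (Fin n) (Fin n) ℝ) (k : ℕ) : V n :=
  -(mulv (B k)⁻¹ (gvec f x k))

/-- `η_k = -g_kᵀd_k / ‖d_k‖_{x_k}`. -/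
def etaSeq {n : ℕ} (f : V n → ℝ) (x : ℕ → V n) (B : ℕ → Matrix (Fin n) (Fin n) ℝ) (k : ℕ) : ℝ :=
  -(dot (gvec f x k) (dvec f x B k)) / wnorm f (x k) (dvec f x B k)

/-- The adaptive step size `t_k = η_k / ((1 + M η_k) ‖d_k‖_{x_k})`. -/
def tSeq {n : ℕ} (f : V n → ℝ) (M : ℝ) (x : ℕ → V n) (B : ℕ → Matrix (Fin n) (Fin n) ℝ)
    (k : ℕ) : ℝ :=
  etaSeq f x B k / ((1 + M * etaSeq f x B k) * wnorm f (x k) (dvec f x B k))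

/-- `s_k = x_{k+1} - x_k`. -/
def svec {n : ℕ} (x : ℕ → V n) (k : ℕ) : V n := x (k + 1) - x k

/-- `y_k = g_{k+1} - g_k`. -/
def yvec {n : ℕ} (f : V n → ℝ) (x : ℕ → V n) (k : ℕ) : V n := gvec f x (k + 1) - gvec f x k

/-- The outer product `u vᵀ`. -/
def outer {n : ℕ} (u v : V n) : Matrix (Fin n) (Fin n) ℝ := Matrix.of fun i j => u i * v j

/-- The adaptive BFGS method (Algorithm 1). -/
structure AdaptiveBFGS {n : ℕ} (f : V n → ℝ) (M : ℝ) (x : ℕ → V n)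
    (B : ℕ → Matrix (Fin n) (Fin n) ℝ) : Prop where
  posdef : (B 0).PosDef
  step : ∀ k, x (k + 1) = x k + tSeq f M x B k • dvec f x B k
  update : ∀ k, B (k + 1) =
    B k - (dot (svec x k) (mulv (B k) (svec x k)))⁻¹ • (B k * outer (svec x k) (svec x k) * B k)
      + (dot (yvec f x k) (svec x k))⁻¹ • outer (yvec f x k) (yvec f x k)

/-- `α_k = ‖d_k‖_{x_k} / (√L ‖d_k‖)`. -/
def alphaSeq {n : ℕ} (f : V n → ℝ) (L : ℝ) (x : ℕ → V n) (B : ℕ → Matrix (Fin n) (Fin n) ℝ)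
    (k : ℕ) : ℝ :=
  wnorm f (x k) (dvec f x B k) / (Real.sqrt L * ‖dvec f x B k‖)

/-- The smoothness aided adaptive step size `t̃_k`. -/
def ttSeq {n : ℕ} (f : V n → ℝ) (M L : ℝ) (x : ℕ → V n) (B : ℕ → Matrix (Fin n) (Fin n) ℝ)
    (k : ℕ) : ℝ :=
  if (1 + M * etaSeq f x B k) * alphaSeq f L x B k ≤ 1 then
    etaSeq f x B k / ((1 + M * etaSeq f x B k) * wnorm f (x k) (dvec f x B k))
  else
    (M * etaSeq f x B k * alphaSeq f L x B k ^ 2 + (1 - alphaSeq f L x B k) ^ 2)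
      / (M * wnorm f (x k) (dvec f x B k))

/-- The smoothness aided adaptive BFGS method SA²-BFGS (Algorithm 3). -/
structure SA2BFGS {n : ℕ} (f : V n → ℝ) (M L : ℝ) (x : ℕ → V n)
    (B : ℕ → Matrix (Fin n) (Fin n) ℝ) : Prop where
  posdef : (B 0).PosDef
  step : ∀ k, x (k + 1) = x k + ttSeq f M L x B k • dvec f x B k
  update : ∀ k, B (k + 1) =
    B k - (dot (svec x k) (mulv (B k) (svec x k)))⁻¹ • (B k * outer (svec x k) (svec x k) * B k)
      + (dot (yvec f x k) (svec x k))⁻¹ • outer (yvec f x k) (yvec f x k)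

/-- The positive semidefinite square root of a positive semidefinite matrix
(the definition `Matrix.PosSemidef.sqrt` of the older Mathlib). -/
def posSemidefSqrt {m : Type*} [Fintype m] [DecidableEq m]
    {A : Matrix m m ℝ} (hA : A.PosSemidef) : Matrix m m ℝ :=
  hA.isHermitian.eigenvectorUnitary.1 * Matrix.diagonal ((↑) ∘ (√·) ∘ hA.isHermitian.eigenvalues) *
    (star hA.isHermitian.eigenvectorUnitary : Matrix m m ℝ)

/-- `ĝ_k = P^{-1/2} g_k`. -/
def hatg {n : ℕ} (f : V n → ℝ) (x : ℕ → V n) (P : Matrix (Fin n) (Fin n) ℝ) (hP : P.PosDef)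
    (k : ℕ) : V n :=
  mulv (posSemidefSqrt hP.posSemidef)⁻¹ (gvec f x k)

/-- `ŝ_k = P^{1/2} s_k`. -/
def hats {n : ℕ} (x : ℕ → V n) (P : Matrix (Fin n) (Fin n) ℝ) (hP : P.PosDef) (k : ℕ) : V n :=
  mulv (posSemidefSqrt hP.posSemidef) (svec x k)

/-- `ŷ_k = P^{-1/2} y_k`. -/
def haty {n : ℕ} (f : V n → ℝ) (x : ℕ → V n) (P : Matrix (Fin n) (Fin n) ℝ) (hP : P.PosDef)
    (k : ℕ) : V n :=
  mulv (posSemidefSqrt hP.posSemidef)⁻¹ (yvec f x k)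

/-- `cos θ̂_k = -ĝ_kᵀŝ_k / (‖ĝ_k‖ ‖ŝ_k‖)`. -/
def cosθ {n : ℕ} (f : V n → ℝ) (x : ℕ → V n) (P : Matrix (Fin n) (Fin n) ℝ) (hP : P.PosDef)
    (k : ℕ) : ℝ :=
  -(dot (hatg f x P hP k) (hats x P hP k)) / (‖hatg f x P hP k‖ * ‖hats x P hP k‖)

/-- `m̂_k = ŷ_kᵀŝ_k / ‖ŝ_k‖²`. -/
def mhat {n : ℕ} (f : V n → ℝ) (x : ℕ → V n) (P : Matrix (Fin n) (Fin n) ℝ) (hP : P.PosDef)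
    (k : ℕ) : ℝ :=
  dot (haty f x P hP k) (hats x P hP k) / ‖hats x P hP k‖ ^ 2

/-- `q̂_k = ‖ĝ_k‖² / (f(x_k) - f(x*))`. -/
def qhat {n : ℕ} (f : V n → ℝ) (x : ℕ → V n) (xstar : V n) (P : Matrix (Fin n) (Fin n) ℝ)
    (hP : P.PosDef) (k : ℕ) : ℝ :=
  ‖hatg f x P hP k‖ ^ 2 / (f (x k) - f xstar)

/-- The potential function `Ψ(A) = tr(A) - ln det(A) - n`. -/
def Psi {n : ℕ} (A : Matrix (Fin n) (Fin n) ℝ) : ℝ := A.trace - Real.log A.det - n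

/-- The Hessian matrix `∇²f(x)` in the standard basis. -/
def hessMatrix {n : ℕ} (f : V n → ℝ) (x : V n) : Matrix (Fin n) (Fin n) ℝ :=
  Matrix.of fun i j =>
    iteratedFDeriv ℝ 2 f x ![EuclideanSpace.single i (1 : ℝ), EuclideanSpace.single j (1 : ℝ)]

namespace SCAux
variable {n : ℕ}

lemma sc_lineDeriv (f : V n → ℝ) (hf : ContDiff ℝ 3 f) (x d : V n) (k : ℕ)
    (hk : k + 1 ≤ 3) (t : ℝ) :
    HasDerivAt (fun s : ℝ => iteratedFDeriv ℝ k f (x + s • d) (fun _ => d))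
      (iteratedFDeriv ℝ (k+1) f (x + t • d) (fun _ => d)) t := by
  have hc : HasDerivAt (fun s : ℝ => x + s • d) d t := by
    simpa using ((hasDerivAt_id t).smul_const d).const_add x
  have hF : ContDiff ℝ 1 (iteratedFDeriv ℝ k f) := by
    apply hf.iteratedFDeriv_right
    have : (1:ℕ) + k ≤ 3 := by omega
    exact_mod_cast this
  have hFd : HasFDerivAt (iteratedFDeriv ℝ k f)
      (fderiv ℝ (iteratedFDeriv ℝ k f) (x + t • d)) (x + t • d) :=
    (hF.differentiable one_ne_zero (x + t • d)).hasFDerivAt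
  have h1 : HasDerivAt (fun s : ℝ => iteratedFDeriv ℝ k f (x + s • d))
      (fderiv ℝ (iteratedFDeriv ℝ k f) (x + t • d) d) t := hFd.comp_hasDerivAt t hc
  have h2 := ((ContinuousMultilinearMap.apply ℝ (fun _ : Fin k => V n) ℝ
      (fun _ => d)).hasFDerivAt).comp_hasDerivAt t h1
  exact h2

/-- the directional derivative `g1`. -/
def g1 (f : V n → ℝ) (x d : V n) (s : ℝ) : ℝ :=
  iteratedFDeriv ℝ 1 f (x + s • d) (fun _ => d)

def q2 (f : V n → ℝ) (x d : V n) (s : ℝ) : ℝ :=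
  iteratedFDeriv ℝ 2 f (x + s • d) (fun _ => d)

def q3 (f : V n → ℝ) (x d : V n) (s : ℝ) : ℝ :=
  iteratedFDeriv ℝ 3 f (x + s • d) (fun _ => d)

lemma hasDerivAt_psi (f : V n → ℝ) (hf : ContDiff ℝ 3 f) (x d : V n) (t : ℝ) :
    HasDerivAt (fun s : ℝ => f (x + s • d)) (g1 f x d t) t := by
  have := sc_lineDeriv f hf x d 0 (by norm_num) t
  simp only [iteratedFDeriv_zero_apply] at this
  exact this

lemma hasDerivAt_g1 (f : V n → ℝ) (hf : ContDiff ℝ 3 f) (x d : V n) (t : ℝ) :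
    HasDerivAt (g1 f x d) (q2 f x d t) t :=
  sc_lineDeriv f hf x d 1 (by norm_num) t

lemma hasDerivAt_q2 (f : V n → ℝ) (hf : ContDiff ℝ 3 f) (x d : V n) (t : ℝ) :
    HasDerivAt (q2 f x d) (q3 f x d t) t :=
  sc_lineDeriv f hf x d 2 (by norm_num) t

lemma pair_eq (d : V n) : ![d, d] = (fun _ : Fin 2 => d) := by
  funext i; fin_cases i <;> rfl

lemma triple_eq (d : V n) : ![d, d, d] = (fun _ : Fin 3 => d) := by
  funext i; fin_cases i <;> rfl

lemma q2_eq_hessQ (f : V n → ℝ) (x d : V n) (t : ℝ) :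
    hessQ f (x + t • d) d = q2 f x d t := by
  rw [hessQ, q2, pair_eq]

lemma g1_inner (f : V n → ℝ) (x d : V n) (t : ℝ) :
    g1 f x d t = dot (gradient f (x + t • d)) d := by
  have h1 : dot (gradient f (x + t • d)) d
      = (inner ℝ (gradient f (x + t • d)) d : ℝ) := by
    rw [dot, PiLp.inner_apply]
    simp [RCLike.inner_apply, conj_trivial, mul_comm]
  rw [h1, gradient, InnerProductSpace.toDual_symm_apply, g1, iteratedFDeriv_one_apply]

end SCAux

namespace SCAux
variable {n : ℕ}

lemma q2_lower (f : V n → ℝ) (hf : ContDiff ℝ 3 f) {μ : ℝ} (hμ : 0 < μ)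
    (hsc : StrongConvex μ f) (x d : V n) (t : ℝ) :
    μ * ‖d‖ ^ 2 ≤ q2 f x d t := by
  set K := μ * ‖d‖ ^ 2 with hK
  have hKnn : 0 ≤ K := by positivity
  have hψ := hasDerivAt_psi f hf x d
  have hconv : ConvexOn ℝ Set.univ (fun s : ℝ => f (x + s • d) - K / 2 * s ^ 2) := by
    refine ⟨convex_univ, ?_⟩
    intro a _ b _ la lb hla hlb hlab
    have hpt : x + (la * a + lb * b) • d = la • (x + a • d) + lb • (x + b • d) := by
      have h1 : la • (x + a • d) + lb • (x + b • d)
          = (la + lb) • x + (la * a + lb * b) • d := by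
        simp only [smul_add, add_smul, smul_smul]
        abel
      rw [h1, hlab, one_smul]
    have hnorm : ‖(x + a • d) - (x + b • d)‖ ^ 2 = (a - b) ^ 2 * ‖d‖ ^ 2 := by
      have h2 : (x + a • d) - (x + b • d) = (a - b) • d := by
        rw [sub_smul]; abel
      rw [h2, norm_smul, mul_pow, Real.norm_eq_abs, sq_abs]
    have h := hsc (x + a • d) (x + b • d) la hla (by linarith)
    rw [show (1 - la) = lb by linarith, ← hpt, hnorm] at h
    have expand : la * lb * μ / 2 * ((a - b) ^ 2 * ‖d‖ ^ 2)
        = K / 2 * (la * a ^ 2 + lb * b ^ 2) - K / 2 * (la * a + lb * b) ^ 2 := by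
      rw [hK]
      have hlb' : lb = 1 - la := by linarith
      subst hlb'; ring
    simp only [smul_eq_mul]
    nlinarith [h, expand]
  have hφ' : ∀ s : ℝ, HasDerivAt (fun s : ℝ => f (x + s • d) - K / 2 * s ^ 2)
      (g1 f x d s - K * s) s := by
    intro s
    have h2 : HasDerivAt (fun s : ℝ => K / 2 * s ^ 2) (K * s) s := by
      have := (hasDerivAt_pow 2 s).const_mul (K / 2)
      refine this.congr_deriv ?_
      push_cast; ring
    exact (hψ s).sub h2
  have hmono : Monotone (fun s => g1 f x d s - K * s) := by
    have hm := hconv.monotoneOn_deriv (fun s _ => (hφ' s).differentiableAt)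
    have heq : deriv (fun s : ℝ => f (x + s • d) - K / 2 * s ^ 2)
        = fun s => g1 f x d s - K * s := funext fun s => (hφ' s).deriv
    rw [heq] at hm
    exact monotoneOn_univ.mp hm
  have hdK : HasDerivAt (fun s => g1 f x d s - K * s) (q2 f x d t - K) t := by
    have h2 : HasDerivAt (fun s : ℝ => K * s) K t := by
      simpa using (hasDerivAt_id t).const_mul K
    exact (hasDerivAt_g1 f hf x d t).sub h2
  rw [hasDerivAt_iff_tendsto_slope] at hdK
  have hdK' : Filter.Tendsto (slope (fun s => g1 f x d s - K * s) t) (nhdsWithin t (Set.Ioi t))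
      (nhds (q2 f x d t - K)) :=
    hdK.mono_left (nhdsWithin_mono t (fun s hs => ne_of_gt hs))
  have hge : 0 ≤ q2 f x d t - K := by
    refine ge_of_tendsto hdK' ?_
    filter_upwards [self_mem_nhdsWithin] with s hs
    rw [slope_def_field]
    apply div_nonneg
    · have h3 := hmono (le_of_lt hs)
      simp only [Set.mem_Ioi] at hs
      dsimp only at h3
      linarith
    · simp only [Set.mem_Ioi] at hs; linarith
  linarith

lemma q2_upper (f : V n → ℝ) (hf : ContDiff ℝ 3 f) {L : ℝ}
    (hgrad : LipschitzGrad L f) (x d : V n) (t : ℝ) :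
    q2 f x d t ≤ L * ‖d‖ ^ 2 := by
  have hdK := hasDerivAt_g1 f hf x d t
  rw [hasDerivAt_iff_tendsto_slope] at hdK
  have hdK' : Filter.Tendsto (slope (g1 f x d) t) (nhdsWithin t (Set.Ioi t))
      (nhds (q2 f x d t)) :=
    hdK.mono_left (nhdsWithin_mono t (fun s hs => ne_of_gt hs))
  refine le_of_tendsto hdK' ?_
  filter_upwards [self_mem_nhdsWithin] with s hs
  simp only [Set.mem_Ioi] at hs
  rw [slope_def_field]
  rw [div_le_iff₀ (by linarith)]
  have h1 : g1 f x d s - g1 f x d t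
      = (inner ℝ (gradient f (x + s • d) - gradient f (x + t • d)) d : ℝ) := by
    rw [inner_sub_left, g1_inner, g1_inner]
    have : ∀ u : V n, dot u d = (inner ℝ u d : ℝ) := by
      intro u
      rw [dot, PiLp.inner_apply]
      simp [RCLike.inner_apply, conj_trivial, mul_comm]
    rw [this, this]
  rw [h1]
  calc (inner ℝ (gradient f (x + s • d) - gradient f (x + t • d)) d : ℝ)
      ≤ ‖gradient f (x + s • d) - gradient f (x + t • d)‖ * ‖d‖ := real_inner_le_norm _ _
    _ ≤ (L * ‖(x + s • d) - (x + t • d)‖) * ‖d‖ := by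
        apply mul_le_mul_of_nonneg_right (hgrad _ _) (norm_nonneg d)
    _ = L * ‖d‖ ^ 2 * (s - t) := by
        have h2 : (x + s • d) - (x + t • d) = (s - t) • d := by rw [sub_smul]; abel
        rw [h2, norm_smul, Real.norm_eq_abs, abs_of_pos (by linarith : (0:ℝ) < s - t)]
        ring

lemma q3_bound (f : V n → ℝ) {M : ℝ} (hself : SelfConcordant M f) (x d : V n) (t : ℝ) :
    |q3 f x d t| ≤ 2 * M * q2 f x d t ^ ((3:ℝ)/2) := by
  have := hself (x + t • d) d
  rw [q2_eq_hessQ] at this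
  rw [q3, ← triple_eq d]
  exact this

end SCAux

namespace SCAux
variable {n : ℕ}

/-- comparison helper -/
lemma key_mono (F F' : ℝ → ℝ) (t0 t1 : ℝ) (h01 : t0 ≤ t1)
    (hF : ∀ s ∈ Set.Icc t0 t1, HasDerivAt F (F' s) s)
    (hF0 : ∀ s ∈ Set.Icc t0 t1, 0 ≤ F' s) : F t0 ≤ F t1 := by
  have hm : MonotoneOn F (Set.Icc t0 t1) := by
    apply monotoneOn_of_hasDerivWithinAt_nonneg (convex_Icc t0 t1)
      (fun s hs => (hF s hs).continuousAt.continuousWithinAt)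
      (fun s hs => ((hF s (interior_subset hs)).hasDerivWithinAt))
      (fun s hs => hF0 s (interior_subset hs))
  exact hm (Set.left_mem_Icc.mpr h01) (Set.right_mem_Icc.mpr h01) h01

section Envelope
variable (f : V n → ℝ) (x d : V n) {μ L M : ℝ}

/-- `u t = (√(q2 t))⁻¹`. -/
def uFn (f : V n → ℝ) (x d : V n) (t : ℝ) : ℝ := (Real.sqrt (q2 f x d t))⁻¹

lemma hasDerivAt_u (hf : ContDiff ℝ 3 f) (hq : ∀ s, 0 < q2 f x d s) (t : ℝ) :
    HasDerivAt (uFn f x d)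
      (-(1 / (2 * Real.sqrt (q2 f x d t)) * q3 f x d t) / Real.sqrt (q2 f x d t) ^ 2) t := by
  have hs : HasDerivAt (fun s => Real.sqrt (q2 f x d s))
      (1 / (2 * Real.sqrt (q2 f x d t)) * q3 f x d t) t :=
    (Real.hasDerivAt_sqrt (ne_of_gt (hq t))).comp t (hasDerivAt_q2 f hf x d t)
  exact hs.inv (ne_of_gt (Real.sqrt_pos.mpr (hq t)))

lemma u_deriv_bound (hf : ContDiff ℝ 3 f) (hM : 0 < M) (hself : SelfConcordant M f)
    (hq : ∀ s, 0 < q2 f x d s) (t : ℝ) :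
    ‖-(1 / (2 * Real.sqrt (q2 f x d t)) * q3 f x d t) / Real.sqrt (q2 f x d t) ^ 2‖ ≤ M := by
  set S := Real.sqrt (q2 f x d t) with hS
  have hSpos : 0 < S := Real.sqrt_pos.mpr (hq t)
  have hS2 : S ^ 2 = q2 f x d t := Real.sq_sqrt (hq t).le
  have h32 : q2 f x d t ^ ((3:ℝ)/2) = q2 f x d t * S := by
    rw [show (3:ℝ)/2 = 1 + 1/2 by norm_num, Real.rpow_add (hq t), Real.rpow_one, hS,
      Real.sqrt_eq_rpow]
  have hq3 := q3_bound f hself x d t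
  rw [h32] at hq3
  rw [Real.norm_eq_abs, abs_div, abs_neg, abs_mul, abs_of_pos (by positivity : (0:ℝ) < 1/(2*S)),
    abs_of_pos (by positivity : (0:ℝ) < S ^ 2)]
  rw [div_le_iff₀ (by positivity)]
  have : 1 / (2*S) * |q3 f x d t| ≤ 1 / (2*S) * (2 * M * (q2 f x d t * S)) := by
    apply mul_le_mul_of_nonneg_left hq3 (by positivity)
  calc 1 / (2*S) * |q3 f x d t| ≤ 1 / (2*S) * (2 * M * (q2 f x d t * S)) := this
    _ = M * S ^ 2 := by field_simp; rw [← hS2]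

lemma u_lipschitz (hf : ContDiff ℝ 3 f) (hM : 0 < M) (hself : SelfConcordant M f)
    (hq : ∀ s, 0 < q2 f x d s) (t : ℝ) (ht : 0 ≤ t) :
    |uFn f x d t - uFn f x d 0| ≤ M * t := by
  have := Convex.norm_image_sub_le_of_norm_hasDerivWithin_le
    (f := uFn f x d) (s := Set.univ)
    (fun s _ => (hasDerivAt_u f x d hf hq s).hasDerivWithinAt)
    (fun s _ => u_deriv_bound f x d hf hM hself hq s) convex_univ
    (Set.mem_univ 0) (Set.mem_univ t)
  rw [Real.norm_eq_abs, Real.norm_eq_abs, sub_zero, abs_of_nonneg ht] at this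
  exact this

lemma q2_env_lower (hf : ContDiff ℝ 3 f) (hM : 0 < M) (hself : SelfConcordant M f)
    (hq : ∀ s, 0 < q2 f x d s) (t : ℝ) (ht : 0 ≤ t) :
    (Real.sqrt (q2 f x d 0))⁻¹ ≤ uFn f x d t + M * t ∧
      uFn f x d t ≤ (Real.sqrt (q2 f x d 0))⁻¹ + M * t := by
  have h := u_lipschitz f x d hf hM hself hq t ht
  rw [abs_le] at h
  constructor
  · have : uFn f x d 0 ≤ uFn f x d t + M * t := by linarith [h.1]
    simpa [uFn] using this
  · have : uFn f x d t ≤ uFn f x d 0 + M * t := by linarith [h.2]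
    simpa [uFn] using this

end Envelope
end SCAux


set_option maxHeartbeats 1000000 in
open SCAux in
theorem stmt14 {n : ℕ} (f : V n → ℝ) (μ L M : ℝ) (hμ : 0 < μ) (hL : 0 < L) (hM : 0 < M)
    (hf : ContDiff ℝ 3 f) (hsc : StrongConvex μ f) (hgrad : LipschitzGrad L f)
    (hself : SelfConcordant M f)
    (x d : V n) (hd : d ≠ 0)
    (tl : ℝ) (htl : tl = 1 / (M * wnorm f x d) * (wnorm f x d / (Real.sqrt μ * ‖d‖) - 1))
    (tu : ℝ) (htu : tu = 1 / (M * wnorm f x d) * (1 - wnorm f x d / (Real.sqrt L * ‖d‖)))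
    (t : ℝ) (ht : 0 ≤ t) :
    ((t ≤ tl →
        dot (gradient f (x + t • d)) d ≥
          dot (gradient f x) d + t * wnorm f x d ^ 2 / (1 + M * t * wnorm f x d)) ∧
      (tl < t →
        dot (gradient f (x + t • d)) d ≥
          dot (gradient f x) d + tl * wnorm f x d ^ 2 / (1 + M * tl * wnorm f x d) +
            μ * (t - tl) * ‖d‖ ^ 2)) ∧
    ((t ≤ tu →
        dot (gradient f (x + t • d)) d ≤
          dot (gradient f x) d + t * wnorm f x d ^ 2 / (1 - M * t * wnorm f x d)) ∧
      (tu < t →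
        dot (gradient f (x + t • d)) d ≤
          dot (gradient f x) d + tu * wnorm f x d ^ 2 / (1 - M * tu * wnorm f x d) +
            L * (t - tu) * ‖d‖ ^ 2)) ∧
    ((t ≤ tu →
        f (x + t • d) ≤
          f x + t * dot (gradient f x) d + omegaStar (M * t * wnorm f x d) / M ^ 2) ∧
      (tu < t →
        f (x + t • d) ≤
          f x + t * dot (gradient f x) d + omegaStar (M * tu * wnorm f x d) / M ^ 2 +
            tu * (t - tu) * wnorm f x d ^ 2 / (1 - M * tu * wnorm f x d) +
            L / 2 * (t - tu) ^ 2 * ‖d‖ ^ 2)) := by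
  -- basic positivity
  have hd' : 0 < ‖d‖ := norm_pos_iff.mpr hd
  have hlow : ∀ s, μ * ‖d‖ ^ 2 ≤ q2 f x d s := q2_lower f hf hμ hsc x d
  have hupp : ∀ s, q2 f x d s ≤ L * ‖d‖ ^ 2 := q2_upper f hf hgrad x d
  have hq : ∀ s, 0 < q2 f x d s := fun s => lt_of_lt_of_le (by positivity) (hlow s)
  have hx0 : x + (0:ℝ) • d = x := by simp
  have hq20 : q2 f x d 0 = hessQ f x d := by rw [← q2_eq_hessQ f x d 0, hx0]
  set r := wnorm f x d with hrdef
  have hh0 : 0 < hessQ f x d := hq20 ▸ hq 0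
  have hr0 : Real.sqrt (q2 f x d 0) = r := by rw [hq20, hrdef, wnorm]
  have hr2 : r ^ 2 = q2 f x d 0 := by
    rw [← hr0, Real.sq_sqrt (hq 0).le]
  have hrpos : 0 < r := by rw [hrdef, wnorm]; exact Real.sqrt_pos.mpr hh0
  have hsqmu : 0 < Real.sqrt μ * ‖d‖ := by positivity
  have hsqL : 0 < Real.sqrt L * ‖d‖ := by positivity
  have hmul : Real.sqrt μ * ‖d‖ ≤ r := by
    have h1 : Real.sqrt μ * ‖d‖ = Real.sqrt (μ * ‖d‖ ^ 2) := by
      rw [Real.sqrt_mul hμ.le, Real.sqrt_sq (norm_nonneg d)]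
    rw [h1, hrdef, wnorm, ← hq20]
    exact Real.sqrt_le_sqrt (hlow 0)
  have hrL : r ≤ Real.sqrt L * ‖d‖ := by
    have h1 : Real.sqrt L * ‖d‖ = Real.sqrt (L * ‖d‖ ^ 2) := by
      rw [Real.sqrt_mul hL.le, Real.sqrt_sq (norm_nonneg d)]
    rw [h1, hrdef, wnorm, ← hq20]
    exact Real.sqrt_le_sqrt (hupp 0)
  have hMr : M * r ≠ 0 := by positivity
  have h1atl : 1 + M * r * tl = r / (Real.sqrt μ * ‖d‖) := by
    rw [htl]; field_simp; ring
  have h1atu : 1 - M * r * tu = r / (Real.sqrt L * ‖d‖) := by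
    rw [htu]; field_simp; ring
  have htl0 : 0 ≤ tl := by
    have h2 : (1:ℝ) ≤ r / (Real.sqrt μ * ‖d‖) := (one_le_div hsqmu).mpr hmul
    by_contra hneg
    push_neg at hneg
    nlinarith [h1atl, h2, mul_pos hM hrpos]
  have hatu1 : M * r * tu < 1 := by
    have h2 : 0 < r / (Real.sqrt L * ‖d‖) := div_pos hrpos hsqL
    linarith [h1atu]
  have htu0 : 0 ≤ tu := by
    have h2 : r / (Real.sqrt L * ‖d‖) ≤ 1 := (div_le_one hsqL).mpr hrL
    by_contra hneg
    push_neg at hneg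
    nlinarith [h1atu, h2, mul_pos hM hrpos]
  have hcrossL : r ^ 2 / (1 + M * r * tl) ^ 2 = μ * ‖d‖ ^ 2 := by
    rw [h1atl]
    have hX : (Real.sqrt μ * ‖d‖) ^ 2 = μ * ‖d‖ ^ 2 := by
      rw [mul_pow, Real.sq_sqrt hμ.le]
    rw [← hX]
    field_simp
  have hcrossU : r ^ 2 / (1 - M * r * tu) ^ 2 = L * ‖d‖ ^ 2 := by
    rw [h1atu]
    have hX : (Real.sqrt L * ‖d‖) ^ 2 = L * ‖d‖ ^ 2 := by
      rw [mul_pow, Real.sq_sqrt hL.le]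
    rw [← hX]
    field_simp
  -- envelopes
  have envL : ∀ s, 0 ≤ s → r ^ 2 / (1 + M * r * s) ^ 2 ≤ q2 f x d s := by
    intro s hs
    obtain ⟨h1, h2⟩ := q2_env_lower f x d hf hM hself hq s hs
    rw [hr0] at h1 h2
    have hS : 0 < Real.sqrt (q2 f x d s) := Real.sqrt_pos.mpr (hq s)
    have hut : 0 < uFn f x d s := inv_pos.mpr hS
    have hq2u : q2 f x d s = ((uFn f x d s) ^ 2)⁻¹ := by
      rw [uFn, inv_pow, inv_inv, Real.sq_sqrt (hq s).le]
    have h3 : uFn f x d s ≤ (1 + M * r * s) / r := by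
      have : (1 + M * r * s) / r = r⁻¹ + M * s := by field_simp
      rw [this]; linarith
    have h4 : (uFn f x d s) ^ 2 ≤ ((1 + M * r * s) / r) ^ 2 :=
      pow_le_pow_left₀ hut.le h3 2
    calc r ^ 2 / (1 + M * r * s) ^ 2 = (((1 + M * r * s) / r) ^ 2)⁻¹ := by
          rw [div_pow, inv_div]
      _ ≤ ((uFn f x d s) ^ 2)⁻¹ := inv_anti₀ (by positivity) h4
      _ = q2 f x d s := hq2u.symm
  have envU : ∀ s, 0 ≤ s → M * r * s < 1 → q2 f x d s ≤ r ^ 2 / (1 - M * r * s) ^ 2 := by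
    intro s hs hs1
    obtain ⟨h1, h2⟩ := q2_env_lower f x d hf hM hself hq s hs
    rw [hr0] at h1 h2
    have hS : 0 < Real.sqrt (q2 f x d s) := Real.sqrt_pos.mpr (hq s)
    have hut : 0 < uFn f x d s := inv_pos.mpr hS
    have hq2u : q2 f x d s = ((uFn f x d s) ^ 2)⁻¹ := by
      rw [uFn, inv_pow, inv_inv, Real.sq_sqrt (hq s).le]
    have h3 : (1 - M * r * s) / r ≤ uFn f x d s := by
      have : (1 - M * r * s) / r = r⁻¹ - M * s := by field_simp
      rw [this]; linarith
    have hpos : 0 < (1 - M * r * s) / r := div_pos (by linarith) hrpos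
    have h4 : ((1 - M * r * s) / r) ^ 2 ≤ (uFn f x d s) ^ 2 :=
      pow_le_pow_left₀ hpos.le h3 2
    calc q2 f x d s = ((uFn f x d s) ^ 2)⁻¹ := hq2u
      _ ≤ (((1 - M * r * s) / r) ^ 2)⁻¹ := inv_anti₀ (by positivity) h4
      _ = r ^ 2 / (1 - M * r * s) ^ 2 := by rw [div_pow, inv_div]
  -- claim A : lower bound on g1
  have claimA : ∀ s, 0 ≤ s →
      g1 f x d 0 + s * r ^ 2 / (1 + M * s * r) ≤ g1 f x d s := by
    intro s0 hs0
    have hFd : ∀ s ∈ Set.Icc (0:ℝ) s0,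
        HasDerivAt (fun s => g1 f x d s - s * r ^ 2 / (1 + M * s * r))
          (q2 f x d s - r ^ 2 / (1 + M * r * s) ^ 2) s := by
      intro s hs
      have hdpos : (0:ℝ) < 1 + M * s * r := by nlinarith [hs.1, mul_pos hM hrpos]
      have hden : (1:ℝ) + M * s * r ≠ 0 := ne_of_gt hdpos
      have h1 : HasDerivAt (fun s : ℝ => s * r ^ 2) (r ^ 2) s := by
        simpa using (hasDerivAt_id s).mul_const (r ^ 2)
      have h2 : HasDerivAt (fun s : ℝ => 1 + M * s * r) (M * r) s := by
        have := ((hasDerivAt_id s).const_mul M).mul_const r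
        have h2' := this.const_add 1
        exact h2'.congr_deriv (by ring)
      have h3 := h1.div h2 hden
      have h4 : (r ^ 2 * (1 + M * s * r) - s * r ^ 2 * (M * r)) / (1 + M * s * r) ^ 2
          = r ^ 2 / (1 + M * r * s) ^ 2 := by
        rw [show (1:ℝ) + M * r * s = 1 + M * s * r by ring]
        congr 1; ring
      rw [h4] at h3
      exact (hasDerivAt_g1 f hf x d s).sub h3
    have hnn : ∀ s ∈ Set.Icc (0:ℝ) s0,
        0 ≤ q2 f x d s - r ^ 2 / (1 + M * r * s) ^ 2 := fun s hs => by
      linarith [envL s hs.1]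
    have hkm := key_mono _ _ 0 s0 hs0 hFd hnn
    have h0 : (0:ℝ) * r ^ 2 / (1 + M * 0 * r) = 0 := by norm_num
    rw [h0] at hkm
    linarith
  -- claim B : upper bound on g1 in self-concordant regime
  have claimB : ∀ s0, 0 ≤ s0 → s0 ≤ tu →
      g1 f x d s0 ≤ g1 f x d 0 + s0 * r ^ 2 / (1 - M * s0 * r) := by
    intro s0 hs0 hs0u
    have hlt : ∀ s ∈ Set.Icc (0:ℝ) s0, M * r * s < 1 := by
      intro s hs
      have : M * r * s ≤ M * r * tu :=
        mul_le_mul_of_nonneg_left (le_trans hs.2 hs0u) (le_of_lt (mul_pos hM hrpos))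
      linarith
    have hFd : ∀ s ∈ Set.Icc (0:ℝ) s0,
        HasDerivAt (fun s => g1 f x d 0 + s * r ^ 2 / (1 - M * s * r) - g1 f x d s)
          (r ^ 2 / (1 - M * r * s) ^ 2 - q2 f x d s) s := by
      intro s hs
      have hden : (1:ℝ) - M * s * r ≠ 0 := by
        have := hlt s hs; intro hz; rw [show M * s * r = M * r * s by ring] at hz; linarith
      have h1 : HasDerivAt (fun s : ℝ => s * r ^ 2) (r ^ 2) s := by
        simpa using (hasDerivAt_id s).mul_const (r ^ 2)
      have h2 : HasDerivAt (fun s : ℝ => 1 - M * s * r) (-(M * r)) s := by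
        have := (((hasDerivAt_id s).const_mul M).mul_const r).const_sub 1
        exact this.congr_deriv (by ring)
      have h3 := h1.div h2 hden
      have h4 : (r ^ 2 * (1 - M * s * r) - s * r ^ 2 * (-(M * r))) / (1 - M * s * r) ^ 2
          = r ^ 2 / (1 - M * r * s) ^ 2 := by
        rw [show (1:ℝ) - M * r * s = 1 - M * s * r by ring]
        congr 1; ring
      rw [h4] at h3
      exact (h3.const_add (g1 f x d 0)).sub (hasDerivAt_g1 f hf x d s)
    have hnn : ∀ s ∈ Set.Icc (0:ℝ) s0,
        0 ≤ r ^ 2 / (1 - M * r * s) ^ 2 - q2 f x d s := fun s hs => by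
      linarith [envU s hs.1 (hlt s hs)]
    have hkm := key_mono _ _ 0 s0 hs0 hFd hnn
    have h0 : (0:ℝ) * r ^ 2 / (1 - M * 0 * r) = 0 := by norm_num
    rw [h0] at hkm
    linarith
  -- claim A2 : lower bound beyond tl
  have claimA2 : ∀ s0, tl ≤ s0 →
      g1 f x d tl + μ * ‖d‖ ^ 2 * (s0 - tl) ≤ g1 f x d s0 := by
    intro s0 hs0
    have hFd : ∀ s ∈ Set.Icc tl s0,
        HasDerivAt (fun s => g1 f x d s - μ * ‖d‖ ^ 2 * s)
          (q2 f x d s - μ * ‖d‖ ^ 2) s := by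
      intro s _
      have h2 : HasDerivAt (fun s : ℝ => μ * ‖d‖ ^ 2 * s) (μ * ‖d‖ ^ 2) s := by
        simpa using (hasDerivAt_id s).const_mul (μ * ‖d‖ ^ 2)
      exact (hasDerivAt_g1 f hf x d s).sub h2
    have hnn : ∀ s ∈ Set.Icc tl s0, 0 ≤ q2 f x d s - μ * ‖d‖ ^ 2 := fun s _ => by
      linarith [hlow s]
    have hkm := key_mono _ _ tl s0 hs0 hFd hnn
    linarith
  -- claim B2 : upper bound beyond tu
  have claimB2 : ∀ s0, tu ≤ s0 →
      g1 f x d s0 ≤ g1 f x d 0 + tu * r ^ 2 / (1 - M * tu * r) + L * ‖d‖ ^ 2 * (s0 - tu) := by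
    intro s0 hs0
    have hFd : ∀ s ∈ Set.Icc tu s0,
        HasDerivAt (fun s => g1 f x d 0 + tu * r ^ 2 / (1 - M * tu * r)
            + L * ‖d‖ ^ 2 * (s - tu) - g1 f x d s)
          (L * ‖d‖ ^ 2 - q2 f x d s) s := by
      intro s _
      have h2 : HasDerivAt (fun s : ℝ => g1 f x d 0 + tu * r ^ 2 / (1 - M * tu * r)
          + L * ‖d‖ ^ 2 * (s - tu)) (L * ‖d‖ ^ 2) s := by
        have h3 : HasDerivAt (fun s : ℝ => L * ‖d‖ ^ 2 * (s - tu)) (L * ‖d‖ ^ 2) s := by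
          simpa using ((hasDerivAt_id s).sub_const tu).const_mul (L * ‖d‖ ^ 2)
        exact h3.const_add _
      exact h2.sub (hasDerivAt_g1 f hf x d s)
    have hnn : ∀ s ∈ Set.Icc tu s0, 0 ≤ L * ‖d‖ ^ 2 - q2 f x d s := fun s _ => by
      linarith [hupp s]
    have hkm := key_mono _ _ tu s0 hs0 hFd hnn
    have hbase := claimB tu htu0 le_rfl
    linarith
  -- derivative of omegaStar term
  have homega : ∀ s : ℝ, M * r * s < 1 →
      HasDerivAt (fun s : ℝ => omegaStar (M * s * r) / M ^ 2)
        (s * r ^ 2 / (1 - M * s * r)) s := by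
    intro s hs1
    have hden : (0:ℝ) < 1 - M * s * r := by
      rw [show M * s * r = M * r * s by ring]; linarith
    have h5 : HasDerivAt (fun s : ℝ => 1 - M * s * r) (-(M * r)) s := by
      have := (((hasDerivAt_id s).const_mul M).mul_const r).const_sub 1
      exact this.congr_deriv (by ring)
    have h6 := (Real.hasDerivAt_log (ne_of_gt hden)).comp s h5
    have h7 : HasDerivAt (fun s : ℝ => -(M * s * r)) (-(M * r)) s := by
      have := (((hasDerivAt_id s).const_mul M).mul_const r).neg
      exact this.congr_deriv (by ring)
    have h8 : HasDerivAt (fun s : ℝ => omegaStar (M * s * r))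
        (-(M * r) - (1 - M * s * r)⁻¹ * -(M * r)) s := by
      have := h7.sub h6
      exact this
    have h9 := h8.div_const (M ^ 2)
    refine h9.congr_deriv ?_
    have hden1 : 1 - M * s * r ≠ 0 := hden.ne'
    have hden2 : 1 - M * r * s ≠ 0 := by rw [show M * r * s = M * s * r by ring]; exact hden1
    field_simp
    ring
  -- claim C : function upper bound in self-concordant regime
  have claimC : ∀ s0, 0 ≤ s0 → s0 ≤ tu →
      f (x + s0 • d) ≤ f x + s0 * g1 f x d 0 + omegaStar (M * s0 * r) / M ^ 2 := by
    intro s0 hs0 hs0u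
    have hlt : ∀ s ∈ Set.Icc (0:ℝ) s0, M * r * s < 1 := by
      intro s hs
      have : M * r * s ≤ M * r * tu :=
        mul_le_mul_of_nonneg_left (le_trans hs.2 hs0u) (le_of_lt (mul_pos hM hrpos))
      linarith
    have hFd : ∀ s ∈ Set.Icc (0:ℝ) s0,
        HasDerivAt (fun s => f x + s * g1 f x d 0 + omegaStar (M * s * r) / M ^ 2
            - f (x + s • d))
          (g1 f x d 0 + s * r ^ 2 / (1 - M * s * r) - g1 f x d s) s := by
      intro s hs
      have h1 : HasDerivAt (fun s : ℝ => f x + s * g1 f x d 0) (g1 f x d 0) s := by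
        simpa using ((hasDerivAt_id s).mul_const (g1 f x d 0)).const_add (f x)
      exact (h1.add (homega s (hlt s hs))).sub (hasDerivAt_psi f hf x d s)
    have hnn : ∀ s ∈ Set.Icc (0:ℝ) s0,
        0 ≤ g1 f x d 0 + s * r ^ 2 / (1 - M * s * r) - g1 f x d s := fun s hs => by
      linarith [claimB s hs.1 (le_trans hs.2 hs0u)]
    have hkm := key_mono _ _ 0 s0 hs0 hFd hnn
    have h0 : omegaStar (M * 0 * r) = 0 := by simp [omegaStar]
    rw [h0, hx0] at hkm
    simp only [zero_mul, mul_zero, zero_add, add_zero, zero_div] at hkm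
    linarith
  -- claim D : function upper bound beyond tu
  have claimD : ∀ s0, tu ≤ s0 →
      f (x + s0 • d) ≤ f x + s0 * g1 f x d 0 + omegaStar (M * tu * r) / M ^ 2
        + tu * (s0 - tu) * r ^ 2 / (1 - M * tu * r)
        + L / 2 * (s0 - tu) ^ 2 * ‖d‖ ^ 2 := by
    intro s0 hs0
    have hFd : ∀ s ∈ Set.Icc tu s0,
        HasDerivAt (fun s => f x + s * g1 f x d 0 + omegaStar (M * tu * r) / M ^ 2
            + tu * (s - tu) * r ^ 2 / (1 - M * tu * r)
            + L / 2 * (s - tu) ^ 2 * ‖d‖ ^ 2 - f (x + s • d))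
          (g1 f x d 0 + tu * r ^ 2 / (1 - M * tu * r) + L * ‖d‖ ^ 2 * (s - tu)
            - g1 f x d s) s := by
      intro s _
      have h1 : HasDerivAt (fun s : ℝ => f x + s * g1 f x d 0) (g1 f x d 0) s := by
        simpa using ((hasDerivAt_id s).mul_const (g1 f x d 0)).const_add (f x)
      have h2 : HasDerivAt (fun s : ℝ => tu * (s - tu) * r ^ 2 / (1 - M * tu * r))
          (tu * r ^ 2 / (1 - M * tu * r)) s := by
        have h2a : HasDerivAt (fun s : ℝ => s - tu) 1 s := (hasDerivAt_id s).sub_const tu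
        have h2b := (h2a.const_mul tu).mul_const (r ^ 2) |>.div_const (1 - M * tu * r)
        simpa using h2b
      have h3 : HasDerivAt (fun s : ℝ => L / 2 * (s - tu) ^ 2 * ‖d‖ ^ 2)
          (L * ‖d‖ ^ 2 * (s - tu)) s := by
        have h3a : HasDerivAt (fun s : ℝ => s - tu) 1 s := (hasDerivAt_id s).sub_const tu
        have h3b := (h3a.pow 2).const_mul (L / 2) |>.mul_const (‖d‖ ^ 2)
        refine h3b.congr_deriv ?_
        push_cast; ring
      have h4 := ((h1.add_const (omegaStar (M * tu * r) / M ^ 2)).add h2).add h3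
      have h5 := h4.sub (hasDerivAt_psi f hf x d s)
      exact h5
    have hnn : ∀ s ∈ Set.Icc tu s0,
        0 ≤ g1 f x d 0 + tu * r ^ 2 / (1 - M * tu * r) + L * ‖d‖ ^ 2 * (s - tu)
          - g1 f x d s := fun s hs => by
      linarith [claimB2 s hs.1]
    have hkm := key_mono _ _ tu s0 hs0 hFd hnn
    have hbase := claimC tu htu0 le_rfl
    have hz : tu - tu = 0 := by ring
    rw [hz] at hkm
    simp only [mul_zero, zero_mul, ne_eq, OfNat.ofNat_ne_zero, not_false_eq_true,
      zero_pow, add_zero, zero_div] at hkm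
    linarith
  -- translate to dot products
  have hg10 : g1 f x d 0 = dot (gradient f x) d := by
    rw [g1_inner f x d 0, hx0]
  have hgt : ∀ s : ℝ, g1 f x d s = dot (gradient f (x + s • d)) d := g1_inner f x d
  refine ⟨⟨?_, ?_⟩, ⟨?_, ?_⟩, ⟨?_, ?_⟩⟩
  · intro _
    have h1 := claimA t ht
    rw [hg10, hgt t] at h1
    exact h1
  · intro htlt
    have h1 := claimA tl htl0
    have h2 := claimA2 t (le_of_lt htlt)
    rw [hg10] at h1
    rw [hgt t] at h2
    rw [ge_iff_le, show μ * (t - tl) * ‖d‖ ^ 2 = μ * ‖d‖ ^ 2 * (t - tl) from by ring]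
    linarith
  · intro htu
    have h1 := claimB t ht htu
    rw [hg10, hgt t] at h1
    exact h1
  · intro htut
    have h1 := claimB2 t (le_of_lt htut)
    rw [hg10, hgt t] at h1
    rw [show L * (t - tu) * ‖d‖ ^ 2 = L * ‖d‖ ^ 2 * (t - tu) from by ring]
    linarith
  · intro htu
    have h1 := claimC t ht htu
    rw [hg10] at h1
    exact h1
  · intro htut
    have h1 := claimD t (le_of_lt htut)
    rw [hg10] at h1
    exact h1
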